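/- Let Θ be a convex open subset of ℝ^p, μ a measure on ℝ^d, and T : ℝ^d → ℝ^p measurable such that M(θ) := ∫ exp(θᵀ T(z)) μ(dz) < ∞ for all θ ∈ Θ. Then M is infinitely differentiable on Θ with gradient DM(θ) = ∫ T(z) exp(θᵀ T(z)) μ(dz) and Hessian D²M(θ) = ∫ T(z) T(z)ᵀ exp(θᵀ T(z)) μ(dz). If moreover μ({z ∈ ℝ^d : bᵀ T(z) ≠ 0}) > 0 for every b ∈ ℝ^p \ {0}, then the map F := DM : Θ → ℝ^p is injective, its image F(Θ) is open, and the inverse map G := F^{−1} : F(Θ) → Θ is twice continuously differentiable with Jacobian DG(η) = (DF(G(η)))^{−1} = (D²M(G(η)))^{−1}. -/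

import Mathlib

open MeasureTheory Filter Topology
open Metric

noncomputable section

/-- `ℝ^p` as a pi type. -/
abbrev Vec (p : ℕ) := Fin p → ℝ

namespace St17

variable {p d : ℕ}

/-- `t ↦ (v ↦ ∑ j, v j * t j)` as a linear map into CLMs. -/
def linL : Vec p →ₗ[ℝ] (Vec p →L[ℝ] ℝ) where
  toFun t := ∑ j, t j • (ContinuousLinearMap.proj j : Vec p →L[ℝ] ℝ)
  map_add' x y := by simp [add_smul, Finset.sum_add_distrib]
  map_smul' c x := by simp [Finset.smul_sum, smul_smul]

def lin (t : Vec p) : Vec p →L[ℝ] ℝ := linL t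

lemma lin_apply (t v : Vec p) : lin t v = ∑ j, v j * t j := by
  simp [lin, linL, mul_comm]

lemma continuous_lin : Continuous (lin (p := p)) :=
  linL.continuous_of_finiteDimensional

lemma lin_norm_le (t : Vec p) : ‖lin t‖ ≤ ∑ j, |t j| := by
  refine ContinuousLinearMap.opNorm_le_bound _ (by positivity) fun v => ?_
  rw [lin_apply]
  calc |∑ j, v j * t j| ≤ ∑ j, |v j * t j| := Finset.abs_sum_le_sum_abs _ _
    _ ≤ ∑ j, ‖v‖ * |t j| := by
        refine Finset.sum_le_sum fun j _ => ?_
        rw [abs_mul]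
        gcongr
        exact norm_le_pi_norm v j
    _ = (∑ j, |t j|) * ‖v‖ := by rw [Finset.sum_mul]; exact Finset.sum_congr rfl fun j _ => mul_comm _ _

end St17

namespace St17x
end St17x
namespace St17

/-- vertex of the box around `θ₀` -/
def vtx (θ₀ : Vec p) (r : ℝ) (A : Finset (Fin p)) : Vec p :=
  fun i => θ₀ i + (if i ∈ A then r else -r)

lemma dist_vtx_le (θ₀ : Vec p) {r : ℝ} (hr : 0 ≤ r) (A : Finset (Fin p)) :
    dist (vtx θ₀ r A) θ₀ ≤ r := by
  rw [dist_pi_le_iff hr]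
  intro i
  rw [Real.dist_eq, vtx]
  by_cases h : i ∈ A <;> simp [h, abs_of_nonneg hr, abs_of_nonpos (neg_nonpos.2 hr), hr]

lemma exp_lin_le (θ₀ : Vec p) {r : ℝ} (θ : Vec p)
    (hθ : ∀ i, |θ i - θ₀ i| ≤ r) (t : Vec p) :
    Real.exp (lin t θ) ≤ ∑ A : Finset (Fin p), Real.exp (lin t (vtx θ₀ r A)) := by
  have key : ∀ A : Finset (Fin p), Real.exp (lin t (vtx θ₀ r A))
      = (∏ i ∈ A, Real.exp ((θ₀ i + r) * t i)) *
        ∏ i ∈ Finset.univ \ A, Real.exp ((θ₀ i - r) * t i) := by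
    intro A
    rw [lin_apply, ← Real.exp_sum, ← Real.exp_sum, ← Real.exp_add]
    congr 1
    have : ∀ i : Fin p, vtx θ₀ r A i * t i
        = (if i ∈ A then (θ₀ i + r) * t i else (θ₀ i - r) * t i) := by
      intro i
      by_cases h : i ∈ A
      · simp only [vtx, if_pos h]
      · simp only [vtx, if_neg h]; ring
    calc ∑ j, vtx θ₀ r A j * t j
        = ∑ j, (if j ∈ A then (θ₀ j + r) * t j else (θ₀ j - r) * t j) :=
          Finset.sum_congr rfl fun j _ => this j
      _ = _ := by
          rw [Finset.sum_ite, Finset.filter_mem_eq_inter, Finset.univ_inter,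
            Finset.sdiff_eq_filter]
  calc Real.exp (lin t θ) = ∏ i, Real.exp (θ i * t i) := by rw [lin_apply, Real.exp_sum]
    _ ≤ ∏ i, (Real.exp ((θ₀ i + r) * t i) + Real.exp ((θ₀ i - r) * t i)) := by
        refine Finset.prod_le_prod (fun i _ => (Real.exp_pos _).le) fun i _ => ?_
        rcases le_total 0 (t i) with h | h
        · have h2 : θ i * t i ≤ (θ₀ i + r) * t i := by nlinarith [abs_le.1 (hθ i)]
          calc Real.exp (θ i * t i) ≤ Real.exp ((θ₀ i + r) * t i) := Real.exp_le_exp.2 h2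
            _ ≤ _ := le_add_of_nonneg_right (Real.exp_pos _).le
        · have h2 : θ i * t i ≤ (θ₀ i - r) * t i := by nlinarith [abs_le.1 (hθ i)]
          calc Real.exp (θ i * t i) ≤ Real.exp ((θ₀ i - r) * t i) := Real.exp_le_exp.2 h2
            _ ≤ _ := le_add_of_nonneg_left (Real.exp_pos _).le
    _ = _ := by
        rw [Finset.prod_add, ← Finset.powerset_univ]
        exact Finset.sum_congr rfl fun A _ => (key A).symm

/-- weight function: product of coordinates of `T` along a list -/
def wt (T : Vec d → Vec p) (l : List (Fin p)) (z : Vec d) : ℝ :=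
  (l.map fun i => T z i).prod

@[simp] lemma wt_nil (T : Vec d → Vec p) (z : Vec d) : wt T [] z = 1 := rfl

lemma wt_cons (T : Vec d → Vec p) (i : Fin p) (l : List (Fin p)) (z : Vec d) :
    wt T (i :: l) z = T z i * wt T l z := by simp [wt]

lemma measurable_wt {T : Vec d → Vec p} (hT : Measurable T) (l : List (Fin p)) :
    Measurable (wt T l) := by
  induction l with
  | nil =>
      have h : wt T [] = fun _ => (1:ℝ) := rfl
      rw [h]; exact measurable_const
  | cons i l ih =>
      have h : wt T (i :: l) = fun z => T z i * wt T l z := funext fun z => wt_cons T i l z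
      rw [h]
      exact ((measurable_pi_apply i).comp hT).mul ih

lemma measurable_explin {T : Vec d → Vec p} (hT : Measurable T) (θ : Vec p) :
    Measurable (fun z => Real.exp (lin (T z) θ)) := by
  simp only [lin_apply]
  exact (Finset.measurable_sum _ fun j _ =>
    (measurable_const.mul ((measurable_pi_apply j).comp hT))).exp

lemma lin_single (t θ : Vec p) (c : ℝ) (i : Fin p) :
    lin t (θ + c • (Pi.single i 1 : Vec p)) = lin t θ + c * t i := by
  simp only [lin_apply, Pi.add_apply, Pi.smul_apply, smul_eq_mul, add_mul,
    Finset.sum_add_distrib]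
  congr 1
  rw [Finset.sum_eq_single i]
  · simp
  · intro j _ hj; simp [Pi.single_eq_of_ne hj]
  · intro h; exact absurd (Finset.mem_univ i) h

end St17

namespace St17

variable {Θ : Set (Vec p)} {μ : Measure (Vec d)} {T : Vec d → Vec p}

lemma abs_le_exp_comb {δ x : ℝ} (hδ : 0 < δ) :
    |x| ≤ δ⁻¹ * (Real.exp (δ * x) + Real.exp (-(δ * x))) := by
  have h0 : δ * |x| ≤ Real.exp (δ * |x|) := by
    nlinarith [Real.add_one_le_exp (δ * |x|)]
  have h2 : Real.exp (δ * |x|) ≤ Real.exp (δ * x) + Real.exp (-(δ * x)) := by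
    rcases abs_cases x with ⟨h, _⟩ | ⟨h, _⟩
    · rw [h]; exact le_add_of_nonneg_right (Real.exp_pos _).le
    · rw [h, mul_neg]
      exact le_add_of_nonneg_left (Real.exp_pos _).le
  calc |x| = δ⁻¹ * (δ * |x|) := by field_simp
    _ ≤ δ⁻¹ * (Real.exp (δ * |x|)) := by gcongr
    _ ≤ _ := by gcongr

lemma norm_single_le (i : Fin p) : ‖(Pi.single i (1:ℝ) : Vec p)‖ ≤ 1 := by
  rw [pi_norm_le_iff_of_nonneg zero_le_one]
  intro j
  rw [Pi.single_apply]
  split <;> simp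

lemma mem_of_small (hΘ : IsOpen Θ) {θ : Vec p} (hθ : θ ∈ Θ) :
    ∃ δ : ℝ, 0 < δ ∧ ∀ (i : Fin p) (c : ℝ), |c| ≤ δ → θ + c • (Pi.single i 1 : Vec p) ∈ Θ := by
  obtain ⟨ε, hε, hball⟩ := Metric.isOpen_iff.1 hΘ θ hθ
  refine ⟨ε / 2, by positivity, fun i c hc => ?_⟩
  apply hball
  rw [Metric.mem_ball, dist_eq_norm, add_sub_cancel_left, norm_smul]
  calc ‖c‖ * ‖(Pi.single i (1:ℝ) : Vec p)‖ ≤ (ε / 2) * 1 := by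
        refine mul_le_mul ?_ (norm_single_le i) (norm_nonneg _) (by positivity)
        simpa [Real.norm_eq_abs] using hc
    _ < ε := by linarith

lemma integrable_wt (hΘ : IsOpen Θ) (hT : Measurable T)
    (hfin : ∀ θ ∈ Θ, Integrable (fun z => Real.exp (lin (T z) θ)) μ)
    (l : List (Fin p)) : ∀ θ ∈ Θ,
    Integrable (fun z => |wt T l z| * Real.exp (lin (T z) θ)) μ := by
  induction l with
  | nil =>
      intro θ hθ
      simpa using hfin θ hθ
  | cons i l ih =>
      intro θ hθ
      obtain ⟨δ, hδ, hmem⟩ := mem_of_small hΘ hθ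
      have hmem₁ : θ + δ • (Pi.single i 1 : Vec p) ∈ Θ :=
        hmem i δ (by rw [abs_of_pos hδ])
      have hmem₂ : θ + (-δ) • (Pi.single i 1 : Vec p) ∈ Θ :=
        hmem i (-δ) (by rw [abs_neg, abs_of_pos hδ])
      refine Integrable.mono'
        (g := fun z => δ⁻¹ *
          (|wt T l z| * Real.exp (lin (T z) (θ + δ • (Pi.single i 1 : Vec p))) +
           |wt T l z| * Real.exp (lin (T z) (θ + (-δ) • (Pi.single i 1 : Vec p)))))
        (((ih _ hmem₁).add (ih _ hmem₂)).const_mul _)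
        (((measurable_wt hT (i::l)).abs.mul (measurable_explin hT θ)).aestronglyMeasurable)
        (.of_forall fun z => ?_)
      show ‖|wt T (i :: l) z| * Real.exp (lin (T z) θ)‖ ≤ δ⁻¹ *
          (|wt T l z| * Real.exp (lin (T z) (θ + δ • (Pi.single i 1 : Vec p))) +
           |wt T l z| * Real.exp (lin (T z) (θ + (-δ) • (Pi.single i 1 : Vec p))))
      rw [Real.norm_eq_abs, abs_of_nonneg (by positivity), lin_single, lin_single, neg_mul,
        Real.exp_add, Real.exp_add, wt_cons]
      have h1 := abs_le_exp_comb (x := T z i) hδ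
      have h2 : |T z i| * (|wt T l z| * Real.exp (lin (T z) θ))
          ≤ (δ⁻¹ * (Real.exp (δ * T z i) + Real.exp (-(δ * T z i)))) *
            (|wt T l z| * Real.exp (lin (T z) θ)) :=
        mul_le_mul_of_nonneg_right h1 (by positivity)
      calc |T z i * wt T l z| * Real.exp (lin (T z) θ)
          = |T z i| * (|wt T l z| * Real.exp (lin (T z) θ)) := by rw [abs_mul]; ring
        _ ≤ _ := h2
        _ = _ := by ring

end St17

namespace St17

variable {Θ : Set (Vec p)} {μ : Measure (Vec d)} {T : Vec d → Vec p}

lemma integrable_wt' (hΘ : IsOpen Θ) (hT : Measurable T)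
    (hfin : ∀ θ ∈ Θ, Integrable (fun z => Real.exp (lin (T z) θ)) μ)
    (l : List (Fin p)) {θ : Vec p} (hθ : θ ∈ Θ) :
    Integrable (fun z => wt T l z * Real.exp (lin (T z) θ)) μ := by
  refine Integrable.mono' (integrable_wt hΘ hT hfin l θ hθ)
    (((measurable_wt hT l).mul (measurable_explin hT θ)).aestronglyMeasurable)
    (.of_forall fun z => ?_)
  rw [Real.norm_eq_abs, abs_mul, abs_of_pos (Real.exp_pos _)]

def Ml (μ : Measure (Vec d)) (T : Vec d → Vec p) (l : List (Fin p)) (θ : Vec p) : ℝ :=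
  ∫ z, wt T l z * Real.exp (lin (T z) θ) ∂μ

lemma continuous_wtfun (l : List (Fin p)) : Continuous (fun t : Vec p => (l.map fun i => t i).prod) := by
  refine continuous_list_prod l fun i _ => continuous_apply i

lemma continuous_expfun (θ : Vec p) : Continuous (fun t : Vec p => Real.exp (lin t θ)) := by
  have h : (fun t : Vec p => Real.exp (lin t θ)) = fun t => Real.exp (∑ j, θ j * t j) := by
    funext t; rw [lin_apply]
  rw [h]
  exact (continuous_finset_sum _ fun j _ => continuous_const.mul (continuous_apply j)).rexp

lemma aesm_deriv (hT : Measurable T) (l : List (Fin p)) (θ : Vec p) :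
    AEStronglyMeasurable (fun z => (wt T l z * Real.exp (lin (T z) θ)) • lin (T z)) μ := by
  have hc : Continuous (fun t : Vec p =>
      (((l.map fun i => t i).prod) * Real.exp (lin t θ)) • lin t) :=
    (((continuous_wtfun l).mul (continuous_expfun θ)).smul continuous_lin)
  exact hc.comp_aestronglyMeasurable hT.aestronglyMeasurable

end St17

namespace St17

variable {Θ : Set (Vec p)} {μ : Measure (Vec d)} {T : Vec d → Vec p}

lemma integrable_deriv (hΘ : IsOpen Θ) (hT : Measurable T)
    (hfin : ∀ θ ∈ Θ, Integrable (fun z => Real.exp (lin (T z) θ)) μ)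
    (l : List (Fin p)) {θ : Vec p} (hθ : θ ∈ Θ) :
    Integrable (fun z => (wt T l z * Real.exp (lin (T z) θ)) • lin (T z)) μ := by
  refine Integrable.mono'
    (g := fun z => ∑ j, |wt T (j :: l) z| * Real.exp (lin (T z) θ))
    (integrable_finset_sum _ fun j _ => integrable_wt hΘ hT hfin (j :: l) θ hθ)
    (aesm_deriv hT l θ) (.of_forall fun z => ?_)
  calc ‖(wt T l z * Real.exp (lin (T z) θ)) • lin (T z)‖
      = |wt T l z * Real.exp (lin (T z) θ)| * ‖lin (T z)‖ := by
        rw [abs_mul, abs_of_pos (Real.exp_pos _)]; simpa using norm_smul (wt T l z * Real.exp (lin (T z) θ)) (lin (T z))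
    _ ≤ (|wt T l z| * Real.exp (lin (T z) θ)) * ∑ j, |T z j| := by
        rw [abs_mul, abs_of_pos (Real.exp_pos _)]
        exact mul_le_mul_of_nonneg_left (lin_norm_le _) (by positivity)
    _ = ∑ j, |wt T (j :: l) z| * Real.exp (lin (T z) θ) := by
        rw [Finset.mul_sum]
        refine Finset.sum_congr rfl fun j _ => ?_
        rw [wt_cons, abs_mul]
        ring

lemma hasFDerivAt_Ml_integral (hΘ : IsOpen Θ) (hT : Measurable T)
    (hfin : ∀ θ ∈ Θ, Integrable (fun z => Real.exp (lin (T z) θ)) μ)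
    (l : List (Fin p)) {θ₀ : Vec p} (hθ₀ : θ₀ ∈ Θ) :
    HasFDerivAt (Ml μ T l)
      (∫ z, (wt T l z * Real.exp (lin (T z) θ₀)) • lin (T z) ∂μ) θ₀ := by
  obtain ⟨ε, hε, hball⟩ := Metric.isOpen_iff.1 hΘ θ₀ hθ₀
  set r := ε / 2 with hr
  have hrpos : 0 < r := by positivity
  have hvtx : ∀ A : Finset (Fin p), vtx θ₀ r A ∈ Θ := fun A => by
    apply hball
    rw [Metric.mem_ball]
    calc dist (vtx θ₀ r A) θ₀ ≤ r := dist_vtx_le θ₀ hrpos.le A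
      _ < ε := by rw [hr]; linarith
  have main := hasFDerivAt_integral_of_dominated_of_fderiv_le
    (F := fun θ z => wt T l z * Real.exp (lin (T z) θ))
    (F' := fun θ z => (wt T l z * Real.exp (lin (T z) θ)) • lin (T z))
    (x₀ := θ₀)
    (bound := fun z => ∑ j, ∑ A : Finset (Fin p),
      |wt T (j :: l) z| * Real.exp (lin (T z) (vtx θ₀ r A)))
    (Metric.ball_mem_nhds θ₀ hrpos)
    (.of_forall fun θ =>
      ((measurable_wt hT l).mul (measurable_explin hT θ)).aestronglyMeasurable)
    (integrable_wt' hΘ hT hfin l hθ₀)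
    (aesm_deriv hT l θ₀)
    (.of_forall fun z => fun θ hθ => ?_)
    (integrable_finset_sum _ fun j _ => integrable_finset_sum _ fun A _ =>
      integrable_wt hΘ hT hfin (j :: l) _ (hvtx A))
    (.of_forall fun z => fun θ hθ => ?_)
  · exact main
  · -- norm bound
    have hθc : ∀ i, |θ i - θ₀ i| ≤ r := by
      intro i
      calc |θ i - θ₀ i| = dist (θ i) (θ₀ i) := (Real.dist_eq _ _).symm
        _ ≤ dist θ θ₀ := dist_le_pi_dist θ θ₀ i
        _ ≤ r := (Metric.mem_ball.1 hθ).le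
    have hexp := exp_lin_le θ₀ θ hθc (T z)
    calc ‖(wt T l z * Real.exp (lin (T z) θ)) • lin (T z)‖
        = |wt T l z * Real.exp (lin (T z) θ)| * ‖lin (T z)‖ := by
          rw [abs_mul, abs_of_pos (Real.exp_pos _)]; simpa using norm_smul (wt T l z * Real.exp (lin (T z) θ)) (lin (T z))
      _ ≤ (|wt T l z| * Real.exp (lin (T z) θ)) * ∑ j, |T z j| := by
          rw [abs_mul, abs_of_pos (Real.exp_pos _)]
          exact mul_le_mul_of_nonneg_left (lin_norm_le _) (by positivity)
      _ ≤ (|wt T l z| * ∑ A : Finset (Fin p), Real.exp (lin (T z) (vtx θ₀ r A)))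
            * ∑ j, |T z j| := by
          have : 0 ≤ ∑ j, |T z j| := by positivity
          gcongr
      _ = ∑ j, ∑ A : Finset (Fin p),
            |wt T (j :: l) z| * Real.exp (lin (T z) (vtx θ₀ r A)) := by
          rw [mul_comm, Finset.sum_mul]
          refine Finset.sum_congr rfl fun j _ => ?_
          rw [Finset.mul_sum, Finset.mul_sum]
          refine Finset.sum_congr rfl fun A _ => ?_
          rw [wt_cons, abs_mul]
          ring
  · -- differentiability of integrand
    have h1 : HasFDerivAt (fun θ : Vec p => lin (T z) θ) (lin (T z)) θ :=
      (lin (T z)).hasFDerivAt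
    have h2 : HasFDerivAt (fun θ : Vec p => Real.exp (lin (T z) θ))
        (Real.exp (lin (T z) θ) • lin (T z)) θ :=
      (Real.hasDerivAt_exp (lin (T z) θ)).comp_hasFDerivAt θ h1
    have h3 := h2.const_mul (wt T l z)
    rw [smul_smul] at h3
    exact h3
end St17

namespace St17

variable {Θ : Set (Vec p)} {μ : Measure (Vec d)} {T : Vec d → Vec p}

/-- the derivative CLM of `Ml μ T l` -/
def DMl (μ : Measure (Vec d)) (T : Vec d → Vec p) (l : List (Fin p)) (θ : Vec p) :
    Vec p →L[ℝ] ℝ :=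
  ∑ j, Ml μ T (j :: l) θ • (ContinuousLinearMap.proj j : Vec p →L[ℝ] ℝ)

lemma DMl_apply (l : List (Fin p)) (θ v : Vec p) :
    DMl μ T l θ v = ∑ j, v j * Ml μ T (j :: l) θ := by
  simp [DMl, mul_comm]

lemma integral_deriv_eq_DMl (hΘ : IsOpen Θ) (hT : Measurable T)
    (hfin : ∀ θ ∈ Θ, Integrable (fun z => Real.exp (lin (T z) θ)) μ)
    (l : List (Fin p)) {θ : Vec p} (hθ : θ ∈ Θ) :
    (∫ z, (wt T l z * Real.exp (lin (T z) θ)) • lin (T z) ∂μ) = DMl μ T l θ := by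
  refine ContinuousLinearMap.ext fun v => ?_
  rw [ContinuousLinearMap.integral_apply (integrable_deriv hΘ hT hfin l hθ), DMl_apply]
  have h1 : ∀ z, ((wt T l z * Real.exp (lin (T z) θ)) • lin (T z)) v
      = ∑ j, v j * (wt T (j :: l) z * Real.exp (lin (T z) θ)) := by
    intro z
    rw [ContinuousLinearMap.smul_apply, smul_eq_mul, lin_apply (T z) v, Finset.mul_sum]
    refine Finset.sum_congr rfl fun j _ => ?_
    rw [wt_cons]
    ring
  rw [integral_congr_ae (.of_forall h1),
    integral_finset_sum _ fun j _ => (integrable_wt' hΘ hT hfin (j :: l) hθ).const_mul (v j)]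
  refine Finset.sum_congr rfl fun j _ => ?_
  rw [integral_const_mul]
  rfl

lemma hasFDerivAt_Ml (hΘ : IsOpen Θ) (hT : Measurable T)
    (hfin : ∀ θ ∈ Θ, Integrable (fun z => Real.exp (lin (T z) θ)) μ)
    (l : List (Fin p)) {θ : Vec p} (hθ : θ ∈ Θ) :
    HasFDerivAt (Ml μ T l) (DMl μ T l θ) θ := by
  have h := hasFDerivAt_Ml_integral hΘ hT hfin l hθ
  rwa [integral_deriv_eq_DMl hΘ hT hfin l hθ] at h

lemma contDiffOn_Ml (hΘ : IsOpen Θ) (hT : Measurable T)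
    (hfin : ∀ θ ∈ Θ, Integrable (fun z => Real.exp (lin (T z) θ)) μ)
    (n : ℕ) : ∀ l : List (Fin p), ContDiffOn ℝ n (Ml μ T l) Θ := by
  induction n with
  | zero =>
      intro l
      rw [show ((0 : ℕ) : WithTop ℕ∞) = 0 from rfl, contDiffOn_zero]
      exact fun θ hθ =>
        ((hasFDerivAt_Ml hΘ hT hfin l hθ).continuousAt).continuousWithinAt
  | succ n ih =>
      intro l
      rw [show ((n + 1 : ℕ) : WithTop ℕ∞) = (n : WithTop ℕ∞) + 1 by push_cast; ring,
        contDiffOn_succ_iff_fderiv_of_isOpen hΘ]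
      refine ⟨fun θ hθ => ((hasFDerivAt_Ml hΘ hT hfin l hθ).differentiableAt).differentiableWithinAt,
        by simp, ?_⟩
      have heq : Set.EqOn (fderiv ℝ (Ml μ T l)) (fun θ => DMl μ T l θ) Θ := fun θ hθ =>
        (hasFDerivAt_Ml hΘ hT hfin l hθ).fderiv
      refine ContDiffOn.congr ?_ heq
      refine ContDiffOn.sum fun j _ => ?_
      exact ContDiffOn.smul (ih (j :: l)) contDiffOn_const

end St17

namespace St17

variable {Θ : Set (Vec p)} {μ : Measure (Vec d)} {T : Vec d → Vec p}

lemma integrable_smul_vec (hΘ : IsOpen Θ) (hT : Measurable T)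
    (hfin : ∀ θ ∈ Θ, Integrable (fun z => Real.exp (lin (T z) θ)) μ)
    (l : List (Fin p)) {θ : Vec p} (hθ : θ ∈ Θ) :
    Integrable (fun z => (wt T l z * Real.exp (lin (T z) θ)) • T z) μ := by
  refine Integrable.mono'
    (g := fun z => ∑ j, |wt T (j :: l) z| * Real.exp (lin (T z) θ))
    (integrable_finset_sum _ fun j _ => integrable_wt hΘ hT hfin (j :: l) θ hθ)
    (Continuous.comp_aestronglyMeasurable
      (((continuous_wtfun l).mul (continuous_expfun θ)).smul continuous_id)
      hT.aestronglyMeasurable)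
    (.of_forall fun z => ?_)
  calc ‖(wt T l z * Real.exp (lin (T z) θ)) • T z‖
      = (|wt T l z| * Real.exp (lin (T z) θ)) * ‖T z‖ := by
        simpa using norm_smul (wt T l z * Real.exp (lin (T z) θ)) (T z)
    _ ≤ (|wt T l z| * Real.exp (lin (T z) θ)) * ∑ j, |T z j| := by
        refine mul_le_mul_of_nonneg_left ?_ (by positivity)
        rw [pi_norm_le_iff_of_nonneg (by positivity)]
        intro j
        rw [Real.norm_eq_abs]
        exact Finset.single_le_sum (f := fun j => |T z j|) (fun j _ => abs_nonneg _)
          (Finset.mem_univ j)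
    _ = ∑ j, |wt T (j :: l) z| * Real.exp (lin (T z) θ) := by
        rw [Finset.mul_sum]
        refine Finset.sum_congr rfl fun j _ => ?_
        rw [wt_cons, abs_mul]
        ring

lemma pi_integral_coord {f : Vec d → Vec p} (hf : Integrable f μ) (i : Fin p) :
    (∫ z, f z ∂μ) i = ∫ z, f z i ∂μ :=
  ((ContinuousLinearMap.proj i : Vec p →L[ℝ] ℝ).integral_comp_comm hf).symm

lemma integral_smul_vec_coord (hΘ : IsOpen Θ) (hT : Measurable T)
    (hfin : ∀ θ ∈ Θ, Integrable (fun z => Real.exp (lin (T z) θ)) μ)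
    (l : List (Fin p)) {θ : Vec p} (hθ : θ ∈ Θ) (i : Fin p) :
    (∫ z, (wt T l z * Real.exp (lin (T z) θ)) • T z ∂μ) i = Ml μ T (i :: l) θ := by
  rw [pi_integral_coord (integrable_smul_vec hΘ hT hfin l hθ) i]
  unfold Ml
  refine integral_congr_ae (.of_forall fun z => ?_)
  show ((wt T l z * Real.exp (lin (T z) θ)) • T z) i = wt T (i :: l) z * Real.exp (lin (T z) θ)
  rw [Pi.smul_apply, smul_eq_mul, wt_cons]
  ring

def F0 (μ : Measure (Vec d)) (T : Vec d → Vec p) (θ : Vec p) : Vec p :=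
  fun i => Ml μ T [i] θ

def DF0 (μ : Measure (Vec d)) (T : Vec d → Vec p) (θ : Vec p) : Vec p →L[ℝ] Vec p :=
  ContinuousLinearMap.pi (fun i => DMl μ T [i] θ)

lemma DF0_apply (θ w : Vec p) (i : Fin p) :
    DF0 μ T θ w i = ∑ j, w j * Ml μ T [j, i] θ := by
  rw [show DF0 μ T θ w i = DMl μ T [i] θ w from rfl, DMl_apply]

lemma hasFDerivAt_F0 (hΘ : IsOpen Θ) (hT : Measurable T)
    (hfin : ∀ θ ∈ Θ, Integrable (fun z => Real.exp (lin (T z) θ)) μ)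
    {θ : Vec p} (hθ : θ ∈ Θ) :
    HasFDerivAt (F0 μ T) (DF0 μ T θ) θ :=
  hasFDerivAt_pi.2 fun i => hasFDerivAt_Ml hΘ hT hfin [i] hθ

lemma contDiffOn_F0 (hΘ : IsOpen Θ) (hT : Measurable T)
    (hfin : ∀ θ ∈ Θ, Integrable (fun z => Real.exp (lin (T z) θ)) μ)
    (n : ℕ) : ContDiffOn ℝ n (F0 μ T) Θ :=
  contDiffOn_pi.2 fun i => contDiffOn_Ml hΘ hT hfin n [i]

lemma quad_eq (hΘ : IsOpen Θ) (hT : Measurable T)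
    (hfin : ∀ θ ∈ Θ, Integrable (fun z => Real.exp (lin (T z) θ)) μ)
    {θ : Vec p} (hθ : θ ∈ Θ) (b : Vec p) :
    ∫ z, (lin (T z) b)^2 * Real.exp (lin (T z) θ) ∂μ
      = ∑ i, b i * DF0 μ T θ b i := by
  have hptw : ∀ z : Vec d, (lin (T z) b)^2 * Real.exp (lin (T z) θ)
      = ∑ i, b i * ∑ j, b j * (wt T [j, i] z * Real.exp (lin (T z) θ)) := by
    intro z
    rw [lin_apply, sq, Finset.sum_mul_sum, Finset.sum_mul]
    refine Finset.sum_congr rfl fun i _ => ?_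
    rw [Finset.sum_mul, Finset.mul_sum]
    refine Finset.sum_congr rfl fun j _ => ?_
    simp only [wt, List.map_cons, List.map_nil, List.prod_cons, List.prod_nil]
    ring
  rw [integral_congr_ae (.of_forall hptw),
    integral_finset_sum _ fun i _ => Integrable.const_mul
      (integrable_finset_sum _ fun j _ =>
        (integrable_wt' hΘ hT hfin [j, i] hθ).const_mul (b j)) (b i)]
  refine Finset.sum_congr rfl fun i _ => ?_
  rw [integral_const_mul,
    integral_finset_sum _ fun j _ => (integrable_wt' hΘ hT hfin [j, i] hθ).const_mul (b j),
    DF0_apply]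
  congr 1
  refine Finset.sum_congr rfl fun j _ => ?_
  rw [integral_const_mul]
  rfl

lemma quad_pos (hΘ : IsOpen Θ) (hT : Measurable T)
    (hfin : ∀ θ ∈ Θ, Integrable (fun z => Real.exp (lin (T z) θ)) μ)
    {θ : Vec p} (hθ : θ ∈ Θ) {b : Vec p}
    (hb : μ {z | lin (T z) b ≠ 0} ≠ 0) :
    0 < ∫ z, (lin (T z) b)^2 * Real.exp (lin (T z) θ) ∂μ := by
  have hint : Integrable (fun z => (lin (T z) b)^2 * Real.exp (lin (T z) θ)) μ := by
    have hptw : ∀ z : Vec d, (lin (T z) b)^2 * Real.exp (lin (T z) θ)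
        = ∑ i, b i * ∑ j, b j * (wt T [j, i] z * Real.exp (lin (T z) θ)) := by
      intro z
      rw [lin_apply, sq, Finset.sum_mul_sum, Finset.sum_mul]
      refine Finset.sum_congr rfl fun i _ => ?_
      rw [Finset.sum_mul, Finset.mul_sum]
      refine Finset.sum_congr rfl fun j _ => ?_
      simp only [wt, List.map_cons, List.map_nil, List.prod_cons, List.prod_nil]
      ring
    rw [show (fun z => (lin (T z) b)^2 * Real.exp (lin (T z) θ))
        = fun z => ∑ i, b i * ∑ j, b j * (wt T [j, i] z * Real.exp (lin (T z) θ)) from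
      funext hptw]
    exact integrable_finset_sum _ fun i _ => Integrable.const_mul
      (integrable_finset_sum _ fun j _ =>
        (integrable_wt' hΘ hT hfin [j, i] hθ).const_mul (b j)) (b i)
  rw [integral_pos_iff_support_of_nonneg (fun z => by positivity) hint]
  have hsupp : Function.support (fun z => (lin (T z) b)^2 * Real.exp (lin (T z) θ))
      = {z | lin (T z) b ≠ 0} := by
    ext z
    simp only [Function.mem_support, Set.mem_setOf_eq]
    constructor
    · intro h hc; apply h; rw [hc]; ring
    · intro h hc
      rcases mul_eq_zero.1 hc with h1 | h1
      · exact h ((pow_eq_zero_iff two_ne_zero).1 h1)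
      · exact Real.exp_ne_zero _ h1
  rw [hsupp]
  exact pos_iff_ne_zero.2 hb

end St17

namespace St17

variable {Θ : Set (Vec p)} {μ : Measure (Vec d)} {T : Vec d → Vec p}

lemma injOn_F0 (hconv : Convex ℝ Θ) (hΘ : IsOpen Θ) (hT : Measurable T)
    (hfin : ∀ θ ∈ Θ, Integrable (fun z => Real.exp (lin (T z) θ)) μ)
    (hμ : ∀ b : Vec p, b ≠ 0 → μ {z | lin (T z) b ≠ 0} ≠ 0) :
    Set.InjOn (F0 μ T) Θ := by
  intro θ₁ h₁ θ₂ h₂ hFeq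
  by_contra hne
  set b := θ₂ - θ₁ with hbdef
  have hbne : b ≠ 0 := sub_ne_zero.2 (Ne.symm hne)
  have hc : ∀ t : ℝ, t ∈ Set.Icc (0:ℝ) 1 → θ₁ + t • b ∈ Θ := by
    intro t ht
    have h := hconv h₁ h₂ (by linarith [ht.2] : (0:ℝ) ≤ 1 - t) ht.1 (by ring)
    have he : θ₁ + t • b = (1 - t) • θ₁ + t • θ₂ := by
      rw [hbdef]; module
    rw [he]; exact h
  set k : ℝ → ℝ := fun t => ∑ i, b i * Ml μ T [i] (θ₁ + t • b) with hk
  have hpath : ∀ t : ℝ, HasDerivAt (fun t : ℝ => θ₁ + t • b) b t := by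
    intro t
    have h := ((hasDerivAt_id t).smul_const b).const_add θ₁
    simpa using h
  have hderiv : ∀ t ∈ Set.Icc (0:ℝ) 1,
      HasDerivAt k (∑ i, b i * DF0 μ T (θ₁ + t • b) b i) t := by
    intro t ht
    refine HasDerivAt.fun_sum fun i _ => ?_
    exact ((hasFDerivAt_Ml hΘ hT hfin [i] (hc t ht)).comp_hasDerivAt t
      (hpath t)).const_mul (b i)
  have hcont : ContinuousOn k (Set.Icc 0 1) := fun t ht =>
    ((hderiv t ht).continuousAt).continuousWithinAt
  obtain ⟨t₀, ht₀, hslope⟩ := exists_hasDerivAt_eq_slope k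
    (fun t => ∑ i, b i * DF0 μ T (θ₁ + t • b) b i) (by norm_num) hcont
    (fun t ht => hderiv t ⟨ht.1.le, ht.2.le⟩)
  have hk1 : k 1 = ∑ i, b i * F0 μ T θ₂ i := by
    rw [hk]
    refine Finset.sum_congr rfl fun i _ => ?_
    rw [show θ₁ + (1:ℝ) • b = θ₂ by rw [hbdef]; module]
    rfl
  have hk0 : k 0 = ∑ i, b i * F0 μ T θ₁ i := by
    rw [hk]
    refine Finset.sum_congr rfl fun i _ => ?_
    rw [show θ₁ + (0:ℝ) • b = θ₁ by module]
    rfl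
  rw [hk1, hk0, hFeq] at hslope
  have hzero : (∑ i, b i * DF0 μ T (θ₁ + t₀ • b) b i) = 0 := by
    rw [hslope]; simp
  have hmem : θ₁ + t₀ • b ∈ Θ := hc t₀ ⟨ht₀.1.le, ht₀.2.le⟩
  have hpos := quad_pos hΘ hT hfin hmem (hμ b hbne)
  rw [quad_eq hΘ hT hfin hmem b, hzero] at hpos
  exact lt_irrefl 0 hpos

lemma Ml_swap (i j : Fin p) (θ : Vec p) : Ml μ T [i, j] θ = Ml μ T [j, i] θ := by
  unfold Ml
  refine integral_congr_ae (.of_forall fun z => ?_)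
  simp only [wt, List.map_cons, List.map_nil, List.prod_cons, List.prod_nil]
  ring

lemma integral_linwt (hΘ : IsOpen Θ) (hT : Measurable T)
    (hfin : ∀ θ ∈ Θ, Integrable (fun z => Real.exp (lin (T z) θ)) μ)
    {θ : Vec p} (hθ : θ ∈ Θ) (v : Vec p) :
    ∫ z, (∑ i, v i * T z i) * Real.exp (lin (T z) θ) ∂μ = ∑ j, v j * Ml μ T [j] θ := by
  have hptw : ∀ z : Vec d, (∑ i, v i * T z i) * Real.exp (lin (T z) θ)
      = ∑ j, v j * (wt T [j] z * Real.exp (lin (T z) θ)) := by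
    intro z
    rw [Finset.sum_mul]
    refine Finset.sum_congr rfl fun j _ => ?_
    simp only [wt, List.map_cons, List.map_nil, List.prod_cons, List.prod_nil]
    ring
  rw [integral_congr_ae (.of_forall hptw),
    integral_finset_sum _ fun j _ => (integrable_wt' hΘ hT hfin [j] hθ).const_mul (v j)]
  refine Finset.sum_congr rfl fun j _ => ?_
  rw [integral_const_mul]
  rfl

lemma hessian_integral (hΘ : IsOpen Θ) (hT : Measurable T)
    (hfin : ∀ θ ∈ Θ, Integrable (fun z => Real.exp (lin (T z) θ)) μ)
    {θ : Vec p} (hθ : θ ∈ Θ) (w : Vec p) :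
    (∫ z, ((∑ i, w i * T z i) * Real.exp (lin (T z) θ)) • T z ∂μ) = DF0 μ T θ w := by
  have hptw : (fun z => ((∑ i, w i * T z i) * Real.exp (lin (T z) θ)) • T z)
      = fun z => ∑ j, w j • ((wt T [j] z * Real.exp (lin (T z) θ)) • T z) := by
    funext z
    rw [Finset.sum_mul, Finset.sum_smul]
    refine Finset.sum_congr rfl fun j _ => ?_
    rw [smul_smul]
    congr 1
    simp only [wt, List.map_cons, List.map_nil, List.prod_cons, List.prod_nil]
    ring
  rw [hptw, integral_finset_sum (μ := μ)
    (f := fun j z => w j • ((wt T [j] z * Real.exp (lin (T z) θ)) • T z)) _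
    (fun j _ => (integrable_smul_vec hΘ hT hfin [j] hθ).smul (w j))]
  funext i
  rw [Finset.sum_apply]
  rw [DF0_apply]
  refine Finset.sum_congr rfl fun j _ => ?_
  rw [integral_smul, Pi.smul_apply, smul_eq_mul,
    integral_smul_vec_coord hΘ hT hfin [j] hθ i, Ml_swap]

end St17

open St17

/-- smoothness of the moment generating function `M(θ) = ∫ e^{θᵀT(z)} μ(dz)`
on a convex open set `Θ`, formulas for its gradient `F = DM` and Hessian, and - when
`μ(bᵀT ≠ 0) > 0` for all `b ≠ 0` - injectivity of `F`, openness of `F(Θ)`, and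
`C²`-smoothness of `G = F⁻¹` with `DG(η) = (DF(G(η)))⁻¹`. -/
theorem statement17 {p d : ℕ}
    (Θ : Set (Vec p)) (hconv : Convex ℝ Θ) (hopen : IsOpen Θ)
    (μ : Measure (Vec d)) (T : Vec d → Vec p) (hT : Measurable T)
    (M : Vec p → ℝ) (hM : ∀ θ, M θ = ∫ z, Real.exp (∑ i, θ i * T z i) ∂μ)
    (hfin : ∀ θ ∈ Θ, Integrable (fun z => Real.exp (∑ i, θ i * T z i)) μ)
    (F : Vec p → Vec p)
    (hF : ∀ θ, F θ = ∫ z, Real.exp (∑ i, θ i * T z i) • T z ∂μ) :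
    -- M is infinitely differentiable on Θ
    (ContDiffOn ℝ (⊤ : ℕ∞) M Θ) ∧
    -- gradient formula: DM(θ) = ∫ T(z) e^{θᵀT(z)} μ(dz) = F(θ)
    (∀ θ ∈ Θ, ∀ v : Vec p,
      fderiv ℝ M θ v = ∫ z, (∑ i, v i * T z i) * Real.exp (∑ i, θ i * T z i) ∂μ) ∧
    -- Hessian formula: D²M(θ) = ∫ T(z)T(z)ᵀ e^{θᵀT(z)} μ(dz)
    (∀ θ ∈ Θ, ∀ w : Vec p,
      fderiv ℝ F θ w =
        ∫ z, ((∑ i, w i * T z i) * Real.exp (∑ i, θ i * T z i)) • T z ∂μ) ∧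
    -- if μ(bᵀT ≠ 0) > 0 for all b ≠ 0, then:
    ((∀ b : Vec p, b ≠ 0 → μ {z | (∑ i, b i * T z i) ≠ 0} ≠ 0) →
      Set.InjOn F Θ ∧ IsOpen (F '' Θ) ∧
      ∃ G : Vec p → Vec p,
        (∀ θ ∈ Θ, G (F θ) = θ) ∧
        (∀ η ∈ F '' Θ, G η ∈ Θ ∧ F (G η) = η) ∧
        ContDiffOn ℝ (2 : ℕ∞) G (F '' Θ) ∧
        ∀ η ∈ F '' Θ, ∃ L : Vec p →L[ℝ] Vec p,
          HasFDerivAt G L η ∧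
          L.comp (fderiv ℝ F (G η)) = ContinuousLinearMap.id ℝ (Vec p) ∧
          (fderiv ℝ F (G η)).comp L = ContinuousLinearMap.id ℝ (Vec p)) := by
  have hfin' : ∀ θ ∈ Θ, Integrable (fun z => Real.exp (lin (T z) θ)) μ := by
    intro θ hθ
    have h := hfin θ hθ
    have he : (fun z => Real.exp (∑ i, θ i * T z i))
        = fun z => Real.exp (lin (T z) θ) := funext fun z => by rw [lin_apply]
    rwa [he] at h
  have hMeq : M = Ml μ T [] := by
    funext θ
    rw [hM θ]
    unfold Ml
    refine integral_congr_ae (.of_forall fun z => ?_)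
    show Real.exp (∑ i, θ i * T z i) = wt T [] z * Real.exp (lin (T z) θ)
    rw [wt_nil, one_mul, lin_apply]
  have hFeq : Set.EqOn F (F0 μ T) Θ := by
    intro θ hθ
    have h1 : (fun z => Real.exp (∑ i, θ i * T z i) • T z)
        = fun z => (wt T [] z * Real.exp (lin (T z) θ)) • T z :=
      funext fun z => by rw [wt_nil, one_mul, lin_apply]
    refine funext fun i => ?_
    rw [hF θ, h1]
    exact integral_smul_vec_coord hopen hT hfin' [] hθ i
  have hev : ∀ θ ∈ Θ, F =ᶠ[𝓝 θ] F0 μ T := fun θ hθ =>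
    Filter.eventuallyEq_of_mem (hopen.mem_nhds hθ) hFeq
  refine ⟨?_, ?_, ?_, ?_⟩
  · -- smoothness of M
    rw [hMeq]
    exact contDiffOn_infty.2 fun n => contDiffOn_Ml hopen hT hfin' n []
  · -- gradient formula
    intro θ hθ v
    have h2 : (fun z => (∑ i, v i * T z i) * Real.exp (∑ i, θ i * T z i))
        = fun z => (∑ i, v i * T z i) * Real.exp (lin (T z) θ) :=
      funext fun z => by rw [lin_apply]
    rw [hMeq, (hasFDerivAt_Ml hopen hT hfin' [] hθ).fderiv, DMl_apply, h2,
      integral_linwt hopen hT hfin' hθ v]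
  · -- Hessian formula
    intro θ hθ w
    have hfd : HasFDerivAt F (DF0 μ T θ) θ :=
      (hasFDerivAt_F0 hopen hT hfin' hθ).congr_of_eventuallyEq (hev θ hθ)
    have h2 : (fun z => ((∑ i, w i * T z i) * Real.exp (∑ i, θ i * T z i)) • T z)
        = fun z => ((∑ i, w i * T z i) * Real.exp (lin (T z) θ)) • T z :=
      funext fun z => by rw [lin_apply]
    rw [hfd.fderiv, h2, hessian_integral hopen hT hfin' hθ w]
  · -- the inverse part
    intro hμ'
    have hμ : ∀ b : Vec p, b ≠ 0 → μ {z | lin (T z) b ≠ 0} ≠ 0 := by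
      intro b hb
      have h := hμ' b hb
      have hset : {z | lin (T z) b ≠ 0} = {z | (∑ i, b i * T z i) ≠ 0} := by
        ext z; rw [Set.mem_setOf_eq, Set.mem_setOf_eq, lin_apply]
      rwa [hset]
    have hInj0 : Set.InjOn (F0 μ T) Θ := injOn_F0 hconv hopen hT hfin' hμ
    have hInj : Set.InjOn F Θ := fun x hx y hy h =>
      hInj0 hx hy (by rw [← hFeq hx, ← hFeq hy, h])
    -- positive definiteness of the derivative
    have hDFinj : ∀ θ ∈ Θ, Function.Injective (DF0 μ T θ) := by
      intro θ hθ x y hxy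
      by_contra hne
      have hb : x - y ≠ 0 := sub_ne_zero.2 hne
      have h0 : DF0 μ T θ (x - y) = 0 := by rw [map_sub, hxy, sub_self]
      have hpos := quad_pos hopen hT hfin' hθ (hμ (x - y) hb)
      rw [quad_eq hopen hT hfin' hθ (x - y), h0] at hpos
      simp at hpos
    have hbij : ∀ θ, θ ∈ Θ → Function.Bijective (DF0 μ T θ) := fun θ hθ =>
      ⟨hDFinj θ hθ, LinearMap.injective_iff_surjective.1 (hDFinj θ hθ)⟩
    have keyG : ∀ (θ : Vec p), θ ∈ Θ →
        map F (𝓝 θ) = 𝓝 (F θ) ∧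
        ContDiffAt ℝ 2 (Function.invFunOn F Θ) (F θ) ∧
        ∃ L : Vec p →L[ℝ] Vec p, HasFDerivAt (Function.invFunOn F Θ) L (F θ) ∧
          L.comp (DF0 μ T θ) = ContinuousLinearMap.id ℝ (Vec p) ∧
          (DF0 μ T θ).comp L = ContinuousLinearMap.id ℝ (Vec p) := by
      intro θ hθ
      have hfd : HasFDerivAt F (DF0 μ T θ) θ :=
        (hasFDerivAt_F0 hopen hT hfin' hθ).congr_of_eventuallyEq (hev θ hθ)
      set e : Vec p ≃L[ℝ] Vec p :=
        (LinearEquiv.ofBijective ((DF0 μ T θ) : Vec p →ₗ[ℝ] Vec p)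
          (hbij θ hθ)).toContinuousLinearEquiv with he
      have hco : (e : Vec p →L[ℝ] Vec p) = DF0 μ T θ := by
        refine ContinuousLinearMap.ext fun v => ?_
        rfl
      have hc2 : ContDiffAt ℝ 2 F θ :=
        (((contDiffOn_F0 hopen hT hfin' 2).contDiffAt
          (hopen.mem_nhds hθ)).congr_of_eventuallyEq (hev θ hθ) : ContDiffAt ℝ (2:ℕ) F θ)
      have hfd' : HasFDerivAt F (e : Vec p →L[ℝ] Vec p) θ := by rw [hco]; exact hfd
      have hn : ((2 : ℕ) : WithTop ℕ∞) ≠ 0 := by norm_num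
      have hs : HasStrictFDerivAt F (e : Vec p →L[ℝ] Vec p) θ :=
        hc2.hasStrictFDerivAt' hfd' hn
      have hginv : ∀ᶠ x in 𝓝 θ, Function.invFunOn F Θ (F x) = x :=
        Filter.eventually_of_mem (hopen.mem_nhds hθ) fun x hx =>
          hInj.leftInvOn_invFunOn hx
      have heq : ∀ᶠ y in 𝓝 (F θ),
          Function.invFunOn F Θ y = hc2.localInverse hfd' hn y :=
        hs.localInverse_unique hginv
      have hcd_li : ContDiffAt ℝ (2:ℕ) (hc2.localInverse hfd' hn) (F θ) :=
        hc2.to_localInverse hfd' hn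
      refine ⟨hs.map_nhds_eq_of_equiv, hcd_li.congr_of_eventuallyEq heq,
        (e.symm : Vec p →L[ℝ] Vec p), ?_, ?_, ?_⟩
      · have hgfd := hs.to_localInverse
        exact hgfd.hasFDerivAt.congr_of_eventuallyEq heq
      · rw [← hco]
        refine ContinuousLinearMap.ext fun v => ?_
        simp
      · rw [← hco]
        refine ContinuousLinearMap.ext fun v => ?_
        simp
    have hOpen : IsOpen (F '' Θ) := by
      rw [isOpen_iff_mem_nhds]
      rintro η ⟨θ, hθ, rfl⟩
      rw [← (keyG θ hθ).1]
      exact Filter.image_mem_map (hopen.mem_nhds hθ)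
    refine ⟨hInj, hOpen, Function.invFunOn F Θ, ?_, ?_, ?_, ?_⟩
    · exact fun θ hθ => hInj.leftInvOn_invFunOn hθ
    · rintro η ⟨θ, hθ, rfl⟩
      exact ⟨Function.invFunOn_mem ⟨θ, hθ, rfl⟩, Function.invFunOn_eq ⟨θ, hθ, rfl⟩⟩
    · rintro η ⟨θ, hθ, rfl⟩
      exact ((keyG θ hθ).2.1).contDiffWithinAt
    · rintro η ⟨θ, hθ, rfl⟩
      obtain ⟨_, _, L, h1, h2, h3⟩ := keyG θ hθ
      have hGθ : Function.invFunOn F Θ (F θ) = θ := hInj.leftInvOn_invFunOn hθ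
      have hfd : HasFDerivAt F (DF0 μ T θ) θ :=
        (hasFDerivAt_F0 hopen hT hfin' hθ).congr_of_eventuallyEq (hev θ hθ)
      rw [hGθ, hfd.fderiv]
      exact ⟨L, h1, h2, h3⟩
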